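/- Let φ : ℝ → ℝ be C² and bounded, 0 ≤ ξ ≤ 1/4, and T(λ) = (1−2ξ)(φ'(λ))² − 2ξ φ(λ) φ''(λ). Suppose T is (Lebesgue) integrable on ℝ. Then ∫_ℝ T(λ) dλ ≥ 0. -/

import Mathlib

open MeasureTheory

theorem stmt_6 (φ : ℝ → ℝ) (hφ : ContDiff ℝ 2 φ) (hbd : ∃ M, ∀ l, |φ l| ≤ M)
    (ξ : ℝ) (hξ0 : 0 ≤ ξ) (hξ1 : ξ ≤ 1/4)
    (T : ℝ → ℝ)
    (hT : ∀ l, T l = (1 - 2*ξ) * (deriv φ l)^2 - 2 * ξ * φ l * deriv (deriv φ) l)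
    (hint : Integrable T) :
    (∫ l : ℝ, T l) ≥ 0 := by
  obtain ⟨M, hM⟩ := hbd
  -- basic regularity
  have h2 : ContDiff ℝ ((1:WithTop ℕ∞)+1) φ := by norm_num; exact hφ
  obtain ⟨hdφ, -, hφ'⟩ := contDiff_succ_iff_deriv.mp h2
  have h1 : ContDiff ℝ ((0:WithTop ℕ∞)+1) (deriv φ) := by norm_num; exact hφ'
  obtain ⟨hdφ', -, hφ''⟩ := contDiff_succ_iff_deriv.mp h1
  have hcφ : Continuous φ := hdφ.continuous
  have hcφ' : Continuous (deriv φ) := hdφ'.continuous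
  have hcφ'' : Continuous (deriv (deriv φ)) := hφ''.continuous
  -- p = φ * φ'
  set p : ℝ → ℝ := fun x => φ x * deriv φ x with hp_def
  have hp : ∀ x, HasDerivAt p (deriv φ x ^ 2 + φ x * deriv (deriv φ) x) x := by
    intro x
    have := ((hdφ x).hasDerivAt.mul (hdφ' x).hasDerivAt)
    refine this.congr_deriv ?_
    ring
  have hTp : ∀ x, T x = deriv φ x ^ 2 - 2 * ξ * (deriv φ x ^ 2 + φ x * deriv (deriv φ) x) := by
    intro x; rw [hT x]; ring
  -- G(R) = φ(R)^2/2 + φ(-R)^2/2, G' = u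
  set u : ℝ → ℝ := fun R => p R - p (-R) with hu_def
  set G : ℝ → ℝ := fun R => φ R ^ 2 / 2 + φ (-R) ^ 2 / 2 with hG_def
  have hg : ∀ x : ℝ, HasDerivAt (fun y => φ y ^ 2 / 2) (p x) x := by
    intro x
    have h := (((hdφ x).hasDerivAt.mul (hdφ x).hasDerivAt).div_const 2)
    have heq : (fun y => φ y ^ 2 / 2) = fun y => φ y * φ y / 2 := by
      funext y; ring
    rw [heq]
    refine h.congr_deriv ?_
    simp only [hp_def]; ring
  have hG : ∀ R : ℝ, HasDerivAt G (u R) R := by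
    intro R
    have h1 : HasDerivAt (fun y : ℝ => φ (-y) ^ 2 / 2) (p (-R) * (-1)) R :=
      (hg (-R)).comp R (hasDerivAt_neg R)
    have := (hg R).add h1
    refine this.congr_deriv ?_
    simp only [hu_def]; ring
  have hGbd : ∀ R, |G R| ≤ M ^ 2 := by
    intro R
    have h0 : (0:ℝ) ≤ M := le_trans (abs_nonneg _) (hM 0)
    have h1 : φ R ^ 2 ≤ M ^ 2 := by
      have := hM R; nlinarith [abs_nonneg (φ R), sq_abs (φ R)]
    have h2 : φ (-R) ^ 2 ≤ M ^ 2 := by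
      have := hM (-R); nlinarith [abs_nonneg (φ (-R)), sq_abs (φ (-R))]
    have h3 : (0:ℝ) ≤ φ R ^ 2 := sq_nonneg _
    have h4 : (0:ℝ) ≤ φ (-R) ^ 2 := sq_nonneg _
    rw [abs_le]
    constructor <;> simp only [hG_def] <;> nlinarith
  have hcu : Continuous u := by
    have hcp : Continuous p := hcφ.mul hcφ'
    exact hcp.sub (hcp.comp continuous_neg)
  -- interval integral identity
  have hF : ∀ R : ℝ, (∫ x in (-R)..R, T x) =
      (∫ x in (-R)..R, deriv φ x ^ 2) - 2 * ξ * (p R - p (-R)) := by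
    intro R
    have hi1 : IntervalIntegrable (fun x => deriv φ x ^ 2) volume (-R) R :=
      (hcφ'.pow 2).intervalIntegrable _ _
    have hi2 : IntervalIntegrable (fun x => deriv φ x ^ 2 + φ x * deriv (deriv φ) x)
        volume (-R) R := ((hcφ'.pow 2).add (hcφ.mul hcφ'')).intervalIntegrable _ _
    have hftc : (∫ x in (-R)..R, (deriv φ x ^ 2 + φ x * deriv (deriv φ) x)) =
        p R - p (-R) :=
      intervalIntegral.integral_eq_sub_of_hasDerivAt (fun x _ => hp x) hi2
    calc (∫ x in (-R)..R, T x)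
        = ∫ x in (-R)..R, (deriv φ x ^ 2 -
            (2*ξ) * (deriv φ x ^ 2 + φ x * deriv (deriv φ) x)) := by
          apply intervalIntegral.integral_congr; intro x _; rw [hTp x]
      _ = (∫ x in (-R)..R, deriv φ x ^ 2) -
            (2*ξ) * ∫ x in (-R)..R, (deriv φ x ^ 2 + φ x * deriv (deriv φ) x) := by
          rw [intervalIntegral.integral_sub hi1 (hi2.const_mul _),
            intervalIntegral.integral_const_mul]
      _ = (∫ x in (-R)..R, deriv φ x ^ 2) - 2 * ξ * (p R - p (-R)) := by
          rw [hftc]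
  -- convergence of interval integrals to the full integral
  have hna : Filter.Tendsto (fun R : ℝ => -R) Filter.atTop Filter.atBot :=
    Filter.tendsto_neg_atTop_atBot
  have hten : Filter.Tendsto (fun R : ℝ => ∫ x in (-R)..R, T x) Filter.atTop
      (nhds (∫ l : ℝ, T l)) :=
    intervalIntegral_tendsto_integral hint hna Filter.tendsto_id
  -- main ε-argument
  rw [ge_iff_le]
  refine le_of_forall_pos_le_add fun ε hε => ?_
  obtain ⟨N, hN⟩ := Metric.tendsto_atTop.mp hten (ε/2) (by linarith)
  set ε' := ε / (2 * (2*ξ + 1)) with hε'def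
  have hξpos : (0:ℝ) < 2*ξ + 1 := by linarith
  have hε' : 0 < ε' := by
    apply div_pos hε; linarith
  have hM0 : (0:ℝ) ≤ M := le_trans (abs_nonneg _) (hM 0)
  have hR : ∃ R, max N 0 ≤ R ∧ u R < ε' := by
    by_contra hcon
    push_neg at hcon
    set N₀ := max N 0 with hN₀
    set S := N₀ + (2*M^2 + 1)/ε' with hS
    have hdiv : (0:ℝ) ≤ (2*M^2 + 1)/ε' := by positivity
    have hNS : N₀ ≤ S := by rw [hS]; linarith
    have hFTC : (∫ x in N₀..S, u x) = G S - G N₀ :=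
      intervalIntegral.integral_eq_sub_of_hasDerivAt (fun x _ => hG x)
        (hcu.intervalIntegrable _ _)
    have hmono : (∫ x in N₀..S, (ε' : ℝ)) ≤ ∫ x in N₀..S, u x := by
      apply intervalIntegral.integral_mono_on hNS intervalIntegrable_const
        (hcu.intervalIntegrable _ _)
      intro x hx
      exact hcon x hx.1
    rw [intervalIntegral.integral_const, hFTC] at hmono
    have hSN : S - N₀ = (2*M^2 + 1)/ε' := by rw [hS]; ring
    rw [hSN, smul_eq_mul, div_mul_cancel₀ _ (ne_of_gt hε')] at hmono
    have h2 := hGbd S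
    have h3 := hGbd N₀
    rw [abs_le] at h2 h3
    linarith [h2.1, h2.2, h3.1, h3.2]
  obtain ⟨R, hRN, hRu⟩ := hR
  have hR0 : (0:ℝ) ≤ R := le_trans (le_max_right _ _) hRN
  have hRN' : N ≤ R := le_trans (le_max_left _ _) hRN
  have hdist := hN R hRN'
  rw [Real.dist_eq, abs_lt] at hdist
  have hFR := hF R
  have hnn : 0 ≤ ∫ x in (-R)..R, deriv φ x ^ 2 :=
    intervalIntegral.integral_nonneg (by linarith) (fun x _ => sq_nonneg _)
  have huR : p R - p (-R) < ε' := hRu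
  have hmul : 2*ξ*(p R - p (-R)) ≤ 2*ξ*ε' := by nlinarith
  have hkey : ε' * (2 * (2*ξ + 1)) = ε := by
    rw [hε'def]; field_simp
  nlinarith [hdist.1, hdist.2]
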